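/- Let X and Y be types and let R : X → Y → Prop. Define a bipartite graph B on the disjoint union X ⊔ Y by declaring x ∈ X adjacent to y ∈ Y if and only if R x y (and no edges within X or within Y), and suppose B is connected. Then for every n ≥ 1, the bipartite graph on (X^n) ⊔ (Y^n) in which (x₁,…,x_n) is adjacent to (y₁,…,y_n) if and only if R x_ℓ y_ℓ holds for every ℓ, is connected. -/

import Mathlib

/-- The bipartite graph on `X ⊕ Y` determined by a relation `R : X → Y → Prop`:
`x ∈ X` is adjacent to `y ∈ Y` iff `R x y`, and there are no edges within `X`
or within `Y`. -/
def bipartiteGraph {X Y : Type*} (R : X → Y → Prop) : SimpleGraph (X ⊕ Y) where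
  Adj a b := (∃ x y, R x y ∧ a = Sum.inl x ∧ b = Sum.inr y) ∨
    (∃ x y, R x y ∧ a = Sum.inr y ∧ b = Sum.inl x)
  symm := by
    constructor
    rintro a b (⟨x, y, hR, h1, h2⟩ | ⟨x, y, hR, h1, h2⟩)
    · exact Or.inr ⟨x, y, hR, h2, h1⟩
    · exact Or.inl ⟨x, y, hR, h2, h1⟩
  loopless := by
    constructor
    rintro a (⟨x, y, hR, h1, h2⟩ | ⟨x, y, hR, h1, h2⟩) <;> rw [h1] at h2 <;> simp at h2

/-- Alternating chain of `2k+1` edges from `x` to `y`. -/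
def bgChain {X Y : Type*} (R : X → Y → Prop) : ℕ → X → Y → Prop
  | 0, x, y => R x y
  | (k+1), x, y => ∃ x' y', R x y' ∧ R x' y' ∧ bgChain R k x' y

lemma bgChain_succ {X Y : Type*} {R : X → Y → Prop} :
    ∀ {k x y}, bgChain R k x y → bgChain R (k+1) x y := by
  intro k
  induction k with
  | zero => intro x y h; exact ⟨x, y, h, h, h⟩
  | succ k ih =>
    rintro x y ⟨x', y', h1, h2, h3⟩
    exact ⟨x', y', h1, h2, ih h3⟩

lemma bgChain_mono {X Y : Type*} {R : X → Y → Prop} {k m : ℕ} (hkm : k ≤ m)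
    {x y} (h : bgChain R k x y) : bgChain R m x y := by
  induction m, hkm using Nat.le_induction with
  | base => exact h
  | succ m _ ih => exact bgChain_succ ih

lemma bgChain_reachable {X Y : Type*} {R : X → Y → Prop} :
    ∀ {k x y}, bgChain R k x y →
      (bipartiteGraph R).Reachable (Sum.inl x) (Sum.inr y) := by
  intro k
  induction k with
  | zero => intro x y h; exact SimpleGraph.Adj.reachable (Or.inl ⟨x, y, h, rfl, rfl⟩)
  | succ k ih =>
    rintro x y ⟨x', y', h1, h2, h3⟩
    exact ((SimpleGraph.Adj.reachable (Or.inl ⟨x, y', h1, rfl, rfl⟩)).trans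
      (SimpleGraph.Adj.reachable (Or.inr ⟨x', y', h2, rfl, rfl⟩))).trans (ih h3)

/-- Auxiliary predicate for extracting chains from walks. -/
def bgT {X Y : Type*} (R : X → Y → Prop) (y : Y) : X ⊕ Y → Prop
  | Sum.inl x => ∃ k, bgChain R k x y
  | Sum.inr y' => y' = y ∨ ∃ k x', R x' y' ∧ bgChain R k x' y

lemma bgT_adj {X Y : Type*} {R : X → Y → Prop} {y : Y} {a b : X ⊕ Y}
    (h : (bipartiteGraph R).Adj a b) (hb : bgT R y b) : bgT R y a := by
  rcases h with ⟨x, y', hR, rfl, rfl⟩ | ⟨x, y', hR, rfl, rfl⟩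
  · rcases hb with rfl | ⟨k, x', hx', hc⟩
    · exact ⟨0, hR⟩
    · exact ⟨k + 1, x', y', hR, hx', hc⟩
  · rcases hb with ⟨k, hc⟩
    exact Or.inr ⟨k, x, hR, hc⟩

lemma bgWalk_T {X Y : Type*} {R : X → Y → Prop} {y : Y} :
    ∀ {a b : X ⊕ Y}, (bipartiteGraph R).Walk a b → b = Sum.inr y → bgT R y a := by
  intro a b w
  induction w with
  | nil => rintro rfl; exact Or.inl rfl
  | cons h p ih => intro hb; exact bgT_adj h (ih hb)

lemma reachable_bgChain {X Y : Type*} {R : X → Y → Prop} {x : X} {y : Y}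
    (h : (bipartiteGraph R).Reachable (Sum.inl x) (Sum.inr y)) :
    ∃ k, bgChain R k x y := by
  obtain ⟨w⟩ := h
  exact bgWalk_T w rfl

lemma bgChain_pi {X Y : Type*} {R : X → Y → Prop} {n : ℕ} :
    ∀ {K : ℕ} {f : Fin n → X} {g : Fin n → Y}, (∀ ℓ, bgChain R K (f ℓ) (g ℓ)) →
      bgChain (fun (f : Fin n → X) (g : Fin n → Y) => ∀ ℓ, R (f ℓ) (g ℓ)) K f g := by
  intro K
  induction K with
  | zero => intro f g h; exact h
  | succ k ih =>
    intro f g h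
    choose x' y' h1 h2 h3 using h
    exact ⟨x', y', h1, h2, ih h3⟩

/-- Part (3) of Lemma 4.2 (lem:productup): if the bipartite graph of `R` on
`X ⊕ Y` is connected, then for every `n ≥ 1` the bipartite graph of the
coordinatewise relation on `(Fin n → X) ⊕ (Fin n → Y)` is connected. -/
theorem stmt12 {X Y : Type*} (R : X → Y → Prop)
    (hconn : (bipartiteGraph R).Connected) :
    ∀ n : ℕ, 1 ≤ n →
      (bipartiteGraph
        (fun (f : Fin n → X) (g : Fin n → Y) => ∀ ℓ, R (f ℓ) (g ℓ))).Connected := by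
  intro n hn
  haveI : NeZero n := ⟨by omega⟩
  by_cases hX : Nonempty X
  · by_cases hY : Nonempty Y
    · obtain ⟨x0⟩ := hX
      obtain ⟨y0⟩ := hY
      have key : ∀ (f : Fin n → X) (g : Fin n → Y),
          (bipartiteGraph (fun (f : Fin n → X) (g : Fin n → Y) =>
            ∀ ℓ, R (f ℓ) (g ℓ))).Reachable (Sum.inl f) (Sum.inr g) := by
        intro f g
        have hc : ∀ ℓ, ∃ k, bgChain R k (f ℓ) (g ℓ) := fun ℓ =>
          reachable_bgChain (hconn.preconnected _ _)
        choose k hk using hc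
        have hK : ∀ ℓ, bgChain R (Finset.univ.sup k) (f ℓ) (g ℓ) := fun ℓ =>
          bgChain_mono (Finset.le_sup (Finset.mem_univ ℓ)) (hk ℓ)
        exact bgChain_reachable (bgChain_pi hK)
      haveI : Nonempty ((Fin n → X) ⊕ (Fin n → Y)) := ⟨Sum.inl fun _ => x0⟩
      refine ⟨?_⟩
      rintro (f | g) (f' | g')
      · exact (key f fun _ => y0).trans (key f' fun _ => y0).symm
      · exact key f g'
      · exact (key f' g).symm
      · exact ((key (fun _ => x0) g).symm).trans (key (fun _ => x0) g')
    · haveI : IsEmpty Y := not_nonempty_iff.mp hY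
      have hsub : ∀ x x' : X, x = x' := by
        intro x x'
        obtain ⟨w⟩ := hconn.preconnected (Sum.inl x) (Sum.inl x')
        cases w with
        | nil => rfl
        | cons h _ =>
          rcases h with ⟨_, y, _⟩ | ⟨_, y, _⟩ <;> exact isEmptyElim y
      obtain ⟨x0⟩ := hX
      haveI : Nonempty ((Fin n → X) ⊕ (Fin n → Y)) := ⟨Sum.inl fun _ => x0⟩
      refine ⟨?_⟩
      rintro (f | g) (f' | g')
      · have : f = f' := funext fun ℓ => hsub _ _
        rw [this]
      · exact isEmptyElim (g' 0)
      · exact isEmptyElim (g 0)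
      · exact isEmptyElim (g 0)
  · haveI : IsEmpty X := not_nonempty_iff.mp hX
    have hY : Nonempty Y := by
      obtain ⟨a⟩ := hconn.nonempty
      rcases a with x | y
      · exact isEmptyElim x
      · exact ⟨y⟩
    obtain ⟨y0⟩ := hY
    have hsub : ∀ y y' : Y, y = y' := by
      intro y y'
      obtain ⟨w⟩ := hconn.preconnected (Sum.inr y) (Sum.inr y')
      cases w with
      | nil => rfl
      | cons h _ =>
        rcases h with ⟨x, _, _⟩ | ⟨x, _, _⟩ <;> exact isEmptyElim x
    haveI : Nonempty ((Fin n → X) ⊕ (Fin n → Y)) := ⟨Sum.inr fun _ => y0⟩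
    refine ⟨?_⟩
    rintro (f | g) (f' | g')
    · exact isEmptyElim (f 0)
    · exact isEmptyElim (f 0)
    · exact isEmptyElim (f' 0)
    · have : g = g' := funext fun ℓ => hsub _ _
      rw [this]
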